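/- Gronwall-type propagator bound: let H(t) be a family of self-adjoint operators with form domain containing D, such that μ₋∥∇ψ∥² − ν₋∥ψ∥² ≤ ⟨ψ, H(t)ψ⟩ ≤ μ₊∥∇ψ∥² + ν₊∥ψ∥² uniformly in t, and |⟨ψ, Ḣ(t)ψ⟩| ≤ c μ₋ ∥ψ∥²_{H¹}. If ψ(t) solves iε∂_tψ = H(t)ψ, then the norm ∥ψ(t)∥_t² := ⟨ψ(t), H(t)ψ(t)⟩ + (ν₋+μ₋)∥ψ(t)∥² satisfies ∥ψ(t)∥_t² ≤ e^{ct} ∥ψ(0)∥_0², and hence ∥ψ(t)∥_{H¹} ≤ C e^{ct/2} ∥ψ(0)∥_{H¹} with C = ((μ₊+μ₋+ν₊+ν₋)/μ₋)^{1/2}. -/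

import Mathlib

open ContinuousLinearMap
open scoped InnerProductSpace

/-- Gronwall-type propagator bound: suppose the self-adjoint family `H(t)` satisfies the
form bounds `μ₋‖Dψ‖² - ν₋‖ψ‖² ≤ ⟪ψ, H(t)ψ⟫ ≤ μ₊‖Dψ‖² + ν₊‖ψ‖²` (with `D` playing the
role of the gradient) and `|⟪ψ, Ḣ(t)ψ⟫| ≤ c μ₋ (‖Dψ‖² + ‖ψ‖²)`. If `ψ` solves
`iε ∂ₜψ = H(t)ψ`, then the energy norm
`‖ψ(t)‖ₜ² := ⟪ψ(t), H(t)ψ(t)⟫ + (ν₋+μ₋)‖ψ(t)‖² satisfies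
`‖ψ(t)‖ₜ² ≤ e^{ct} ‖ψ(0)‖₀²`, and hence
`‖ψ(t)‖²_{H¹} ≤ ((μ₊+μ₋+ν₊+ν₋)/μ₋) e^{ct} ‖ψ(0)‖²_{H¹}` for `t ≥ 0`. -/
theorem gronwall_propagator_bound
    {H : Type*} [NormedAddCommGroup H] [InnerProductSpace ℂ H] [CompleteSpace H]
    (μm νm μp νp c ε : ℝ)
    (hμm : 0 < μm) (hνm : 0 < νm) (hμp : 0 < μp) (hνp : 0 < νp) (hc : 0 < c)
    (hε : 0 < ε)
    (D : H →L[ℂ] H)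
    (Ht Ht' : ℝ → H →L[ℂ] H)
    (hsa : ∀ t, IsSelfAdjoint (Ht t))
    (hHderiv : ∀ t, HasDerivAt Ht (Ht' t) t)
    (hform : ∀ (t : ℝ) (ψ : H),
      μm * ‖D ψ‖ ^ 2 - νm * ‖ψ‖ ^ 2 ≤ (⟪ψ, Ht t ψ⟫_ℂ).re ∧
      (⟪ψ, Ht t ψ⟫_ℂ).re ≤ μp * ‖D ψ‖ ^ 2 + νp * ‖ψ‖ ^ 2)
    (hdot : ∀ (t : ℝ) (ψ : H),
      |(⟪ψ, Ht' t ψ⟫_ℂ).re| ≤ c * μm * (‖D ψ‖ ^ 2 + ‖ψ‖ ^ 2))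
    (ψ ψ' : ℝ → H)
    (hψderiv : ∀ t, HasDerivAt ψ (ψ' t) t)
    (hSchr : ∀ t, (Complex.I * (ε : ℂ)) • ψ' t = Ht t (ψ t)) :
    ∀ t : ℝ, 0 ≤ t →
      ((⟪ψ t, Ht t (ψ t)⟫_ℂ).re + (νm + μm) * ‖ψ t‖ ^ 2
          ≤ Real.exp (c * t) * ((⟪ψ 0, Ht 0 (ψ 0)⟫_ℂ).re + (νm + μm) * ‖ψ 0‖ ^ 2)) ∧
      (‖D (ψ t)‖ ^ 2 + ‖ψ t‖ ^ 2
          ≤ ((μp + μm + νp + νm) / μm) * Real.exp (c * t)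
              * (‖D (ψ 0)‖ ^ 2 + ‖ψ 0‖ ^ 2)) := by
  set E : ℝ → ℝ := fun t => (⟪ψ t, Ht t (ψ t)⟫_ℂ).re + (νm + μm) * ‖ψ t‖ ^ 2 with hEdef
  have hsym : ∀ t (x y : H), ⟪Ht t x, y⟫_ℂ = ⟪x, Ht t y⟫_ℂ := fun t => (hsa t).isSymmetric
  -- Re ⟪ψ', H ψ⟫ = 0
  have hre0 : ∀ t, (⟪ψ' t, Ht t (ψ t)⟫_ℂ).re = 0 := by
    intro t
    rw [← hSchr t, inner_smul_right, inner_self_eq_norm_sq_to_K]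
    simp [Complex.mul_re, ← Complex.ofReal_pow]
  -- ⟪ψ, H ψ⟫ is real
  have him : ∀ t, (⟪ψ t, Ht t (ψ t)⟫_ℂ).im = 0 := by
    intro t
    have h1 : (starRingEnd ℂ) ⟪ψ t, Ht t (ψ t)⟫_ℂ = ⟪ψ t, Ht t (ψ t)⟫_ℂ := by
      rw [inner_conj_symm, hsym]
    exact Complex.conj_eq_iff_im.mp h1
  -- Re ⟪ψ, ψ'⟫ = 0
  have hzre : ∀ t, (⟪ψ t, ψ' t⟫_ℂ).re = 0 := by
    intro t
    have hz : (Complex.I * (ε : ℂ)) * ⟪ψ t, ψ' t⟫_ℂ = ⟪ψ t, Ht t (ψ t)⟫_ℂ := by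
      rw [← hSchr t, inner_smul_right]
    have h2 := congrArg Complex.im hz
    simp [Complex.mul_im, Complex.mul_re, him t] at h2
    rcases h2 with h2 | h2
    · exact absurd h2 hε.ne'
    · exact h2
  -- derivative of E
  have hEderiv : ∀ t, HasDerivAt E ((⟪ψ t, Ht' t (ψ t)⟫_ℂ).re) t := by
    intro t
    have hR : HasDerivAt (fun s => (Ht s).restrictScalars ℝ)
        ((Ht' t).restrictScalars ℝ) t :=
      (ContinuousLinearMap.restrictScalarsL ℂ H H ℝ ℝ).hasFDerivAt.comp_hasDerivAt t (hHderiv t)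
    have h1 : HasDerivAt (fun s => Ht s (ψ s)) (Ht' t (ψ t) + Ht t (ψ' t)) t := by
      simpa using hR.clm_apply (hψderiv t)
    have h2 : HasDerivAt (fun s => ⟪ψ s, Ht s (ψ s)⟫_ℂ)
        (⟪ψ t, Ht' t (ψ t) + Ht t (ψ' t)⟫_ℂ + ⟪ψ' t, Ht t (ψ t)⟫_ℂ) t :=
      (hψderiv t).inner ℂ h1
    have h3 := Complex.reCLM.hasFDerivAt.comp_hasDerivAt t h2
    have h4 : HasDerivAt (fun s => ⟪ψ s, ψ s⟫_ℂ)
        (⟪ψ t, ψ' t⟫_ℂ + ⟪ψ' t, ψ t⟫_ℂ) t := (hψderiv t).inner ℂ (hψderiv t)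
    have h5 := Complex.reCLM.hasFDerivAt.comp_hasDerivAt t h4
    have h6 := h3.add (h5.const_mul (νm + μm))
    have hfun : (fun s => Complex.reCLM (⟪ψ s, Ht s (ψ s)⟫_ℂ) +
        (νm + μm) * Complex.reCLM (⟪ψ s, ψ s⟫_ℂ)) = E := by
      funext s
      simp only [hEdef, Complex.reCLM_apply]
      rw [← inner_self_eq_norm_sq (𝕜 := ℂ) (ψ s)]
      rfl
    simp only [Function.comp_def, Pi.add_def] at h6
    rw [hfun] at h6
    refine h6.congr_deriv ?_
    have e1 : (⟪ψ t, Ht t (ψ' t)⟫_ℂ).re = 0 := by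
      rw [← hsym t (ψ t) (ψ' t), ← inner_conj_symm, Complex.conj_re]
      exact hre0 t
    have e2 : (⟪ψ' t, ψ t⟫_ℂ).re = 0 := by
      rw [← inner_conj_symm, Complex.conj_re]
      exact hzre t
    simp [Complex.add_re, inner_add_right, map_add, e1, e2, hre0 t, hzre t]
  -- lower bound: μm (‖Dψ‖² + ‖ψ‖²) ≤ E t
  have hlow : ∀ t, μm * (‖D (ψ t)‖ ^ 2 + ‖ψ t‖ ^ 2) ≤ E t := by
    intro t
    have := (hform t (ψ t)).1
    simp only [hEdef]
    nlinarith [sq_nonneg ‖ψ t‖]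
  -- derivative bound
  have hbound : ∀ t, (⟪ψ t, Ht' t (ψ t)⟫_ℂ).re ≤ c * E t := by
    intro t
    calc (⟪ψ t, Ht' t (ψ t)⟫_ℂ).re ≤ |(⟪ψ t, Ht' t (ψ t)⟫_ℂ).re| := le_abs_self _
      _ ≤ c * μm * (‖D (ψ t)‖ ^ 2 + ‖ψ t‖ ^ 2) := hdot t (ψ t)
      _ = c * (μm * (‖D (ψ t)‖ ^ 2 + ‖ψ t‖ ^ 2)) := by ring
      _ ≤ c * E t := by
          exact mul_le_mul_of_nonneg_left (hlow t) hc.le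
  -- Gronwall via monotonicity of E t e^{-ct}
  have hdE : ∀ t, HasDerivAt (fun s => E s * Real.exp (-(c * s)))
      (((⟪ψ t, Ht' t (ψ t)⟫_ℂ).re - c * E t) * Real.exp (-(c * t))) t := by
    intro t
    have hlin : HasDerivAt (fun s : ℝ => -(c * s)) (-c) t := by
      simpa [Pi.neg_def] using ((hasDerivAt_id t).const_mul c).neg
    have hexp : HasDerivAt (fun s => Real.exp (-(c * s)))
        (Real.exp (-(c * t)) * (-c)) t := (Real.hasDerivAt_exp _).comp t hlin
    have := (hEderiv t).mul hexp
    exact this.congr_deriv (by ring)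
  have hanti : Antitone (fun s => E s * Real.exp (-(c * s))) := by
    apply antitone_of_deriv_nonpos
    · exact fun t => (hdE t).differentiableAt
    · intro t
      rw [(hdE t).deriv]
      apply mul_nonpos_of_nonpos_of_nonneg
      · linarith [hbound t]
      · exact (Real.exp_pos _).le
  intro t ht
  have hmono := hanti ht
  simp only at hmono
  have hE0pos : 0 ≤ E 0 := le_trans (by positivity) (hlow 0)
  have hEt : E t ≤ Real.exp (c * t) * E 0 := by
    have h0 : E 0 * Real.exp (-(c * 0)) = E 0 := by simp
    rw [h0] at hmono
    have hx : Real.exp (-(c * t)) > 0 := Real.exp_pos _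
    have := mul_le_mul_of_nonneg_left hmono (Real.exp_pos (c * t)).le
    calc E t = Real.exp (c * t) * (E t * Real.exp (-(c * t))) := by
          rw [← mul_assoc, mul_comm (Real.exp (c * t)), mul_assoc, ← Real.exp_add]
          simp
      _ ≤ Real.exp (c * t) * E 0 := mul_le_mul_of_nonneg_left hmono (Real.exp_pos _).le
  refine ⟨hEt, ?_⟩
  have hup : E 0 ≤ (μp + μm + νp + νm) * (‖D (ψ 0)‖ ^ 2 + ‖ψ 0‖ ^ 2) := by
    have := (hform 0 (ψ 0)).2
    simp only [hEdef]
    nlinarith [sq_nonneg ‖D (ψ 0)‖, sq_nonneg ‖ψ 0‖]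
  have hfin : μm * (‖D (ψ t)‖ ^ 2 + ‖ψ t‖ ^ 2)
      ≤ Real.exp (c * t) * ((μp + μm + νp + νm) * (‖D (ψ 0)‖ ^ 2 + ‖ψ 0‖ ^ 2)) :=
    le_trans (hlow t) (le_trans hEt
      (mul_le_mul_of_nonneg_left hup (Real.exp_pos _).le))
  rw [div_mul_eq_mul_div, div_mul_eq_mul_div, le_div_iff₀ hμm]
  nlinarith [hfin]
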